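/- arXiv:2204.03079 — 3 statements merged into one kernel-verified Lean document; each statement's English description precedes it below -/
import Mathlib

section
/- Let G be a countable T1 topological group and let I be a weakly closed invariant ideal on G for which alternative (1) of IIA fails, i.e., there is no countable S ⊆ I such that every infinite sequence convergent in G meets some member of S in an infinite set. Let ⟨R_n : n ∈ ω⟩ be a sequence of large relations on G. Then there is a sequence C convergent to the identity 1_G such that R_n⁻¹[C \ F] ∈ I⁺ for every n ∈ ω and every finite F ⊆ G. -/
open Set Filter Topology TopologicalSpace

/-- A set `C` is an (infinite) sequence converging to `p`: it is infinite and
almost contained in every neighborhood of `p`. -/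
def IsConvSeqTo {X : Type*} [TopologicalSpace X] (C : Set X) (p : X) : Prop :=
  C.Infinite ∧ ∀ U ∈ nhds p, (C \ U).Finite

/-- A space is non-discrete if some point is not isolated. -/
def NonDiscrete (X : Type*) [TopologicalSpace X] : Prop :=
  ∃ x : X, ¬ IsOpen ({x} : Set X)

/-- An ideal of subsets: closed under subsets and finite unions, and containing
all finite sets. -/
def IsIdeal {α : Type*} (I : Set (Set α)) : Prop :=
  (∀ A B : Set α, A ⊆ B → B ∈ I → A ∈ I) ∧
  (∀ A ∈ I, ∀ B ∈ I, A ∪ B ∈ I) ∧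
  (∀ A : Set α, A.Finite → A ∈ I)

/-- A family `I` is ω-hitting if for every countable family of infinite sets
there is a member of `I` meeting each of them in an infinite set. -/
def OmegaHitting {α : Type*} (I : Set (Set α)) : Prop :=
  ∀ Y : ℕ → Set α, (∀ n, (Y n).Infinite) → ∃ A ∈ I, ∀ n, (Y n ∩ A).Infinite

/-- An ideal `I` on `α` is tame if for every `I`-positive set `Y`, every
`f : Y → ω` and every ω-hitting ideal `J` on `ω` there is `j ∈ J` whose
`f`-preimage (inside `Y`) is `I`-positive. -/
def Tame {α : Type*} (I : Set (Set α)) : Prop :=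
  ∀ Y : Set α, Y ∉ I → ∀ f : α → ℕ, ∀ J : Set (Set ℕ),
    IsIdeal J → OmegaHitting J → ∃ j ∈ J, Y ∩ f ⁻¹' j ∉ I

/-- `Y` is entangled if for every point `x`, the ideal
`I_x ↾ Y = {A ⊆ Y : x ∉ closure A}` is ω-hitting (on `Y`). -/
def Entangled {X : Type*} [TopologicalSpace X] (Y : Set X) : Prop :=
  ∀ x : X, ∀ Z : ℕ → Set X, (∀ n, Z n ⊆ Y ∧ (Z n).Infinite) →
    ∃ A : Set X, A ⊆ Y ∧ x ∉ closure A ∧ ∀ n, (Z n ∩ A).Infinite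

/-- A space is groomed if it contains no dense entangled subset. -/
def Groomed (X : Type*) [TopologicalSpace X] : Prop :=
  ¬ ∃ D : Set X, Dense D ∧ Entangled D

/-- An ideal on a group is invariant if it is closed under left and right
translations and under inversion. -/
def InvariantIdeal {G : Type*} [Group G] (I : Set (Set G)) : Prop :=
  ∀ A ∈ I, ∀ g : G,
    (fun h => g * h) '' A ∈ I ∧ (fun h => h * g) '' A ∈ I ∧ (fun h => h⁻¹) '' A ∈ I

/-- An ideal on a topological group is weakly closed if for every set `A` and
every sequence `C` converging to the identity,
`A ∈ I ↔ A ∪ {x : C·x ⊆* A} ∈ I`. -/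
def WeaklyClosed {G : Type*} [Group G] [TopologicalSpace G] (I : Set (Set G)) : Prop :=
  ∀ A C : Set G, IsConvSeqTo C 1 →
    (A ∈ I ↔ A ∪ {x : G | ((fun c => c * x) '' C \ A).Finite} ∈ I)

/-- Alternative (1) of IIA: a countable subfamily of `I` capturing (meeting
infinitely) every infinite convergent sequence. -/
def CapturesConvSeqs {G : Type*} [TopologicalSpace G] (I : Set (Set G)) : Prop :=
  ∃ S : Set (Set G), S.Countable ∧ S ⊆ I ∧
    ∀ C : Set G, ∀ p : G, IsConvSeqTo C p → ∃ A ∈ S, (C ∩ A).Infinite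

/-- Alternative (2) of IIA: a countable family of `I`-positive sets which is an
almost π-network: every non-empty open set contains one of them modulo `I`. -/
def HasAlmostPiNetwork {G : Type*} [TopologicalSpace G] (I : Set (Set G)) : Prop :=
  ∃ H : Set (Set G), H.Countable ∧ (∀ A ∈ H, A ∉ I) ∧
    ∀ U : Set G, IsOpen U → U.Nonempty → ∃ A ∈ H, A \ U ∈ I

/-- The Invariant Ideal Axiom: for every countable groomed topological group `G`
and every tame, weakly closed, invariant ideal on `G`, one of the two
alternatives holds. -/
def IIA : Prop :=
  ∀ (G : Type) [Group G] [TopologicalSpace G] [IsTopologicalGroup G] [T1Space G]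
    [Countable G], Groomed G →
    ∀ I : Set (Set G), IsIdeal I → Tame I → WeaklyClosed I → InvariantIdeal I →
      CapturesConvSeqs I ∨ HasAlmostPiNetwork I

/-- A set is scattered if every nonempty subset has a point isolated in it. -/
def IsScattered {X : Type*} [TopologicalSpace X] (A : Set X) : Prop :=
  ∀ B ⊆ A, B.Nonempty → ∃ x ∈ B, ∃ U : Set X, IsOpen U ∧ U ∩ B = {x}

/-- A set is closed discrete if it is closed and discrete as a subspace. -/
def IsClosedDiscrete {X : Type*} [TopologicalSpace X] (D : Set X) : Prop :=
  IsClosed D ∧ ∀ x ∈ D, ∃ U : Set X, IsOpen U ∧ U ∩ D = {x}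

/-- The ideal of nowhere dense subsets of `X`. -/
def nwdIdeal (X : Type*) [TopologicalSpace X] : Set (Set X) :=
  {A | IsNowhereDense A}

/-- The ideal generated by the compact subsets of `X`. -/
def cptIdeal (X : Type*) [TopologicalSpace X] : Set (Set X) :=
  {A | ∃ F : Set (Set X), F.Finite ∧ (∀ K ∈ F, IsCompact K) ∧ A ⊆ ⋃₀ F}

/-- The ideal generated by the closed scattered subsets of `X`. -/
def csctIdeal (X : Type*) [TopologicalSpace X] : Set (Set X) :=
  {A | ∃ F : Set (Set X), F.Finite ∧ (∀ K ∈ F, IsClosed K ∧ IsScattered K) ∧ A ⊆ ⋃₀ F}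

/-- A set is countably compact: every countable open cover has a finite subcover. -/
def IsCountablyCompact' {X : Type*} [TopologicalSpace X] (K : Set X) : Prop :=
  ∀ U : ℕ → Set X, (∀ n, IsOpen (U n)) → K ⊆ ⋃ n, U n →
    ∃ t : Finset ℕ, K ⊆ ⋃ n ∈ t, U n

/-- A `kω`-space: the topology is determined by a countable family of compact sets. -/
def IsKOmega (X : Type*) [TopologicalSpace X] : Prop :=
  ∃ K : ℕ → Set X, (∀ n, IsCompact (K n)) ∧
    ∀ U : Set X, IsOpen U ↔ ∀ n, ∃ V : Set X, IsOpen V ∧ U ∩ K n = V ∩ K n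

/-- A `cω`-space: the topology is determined by a countable family of countably
compact sets. -/
def IsCOmega (X : Type*) [TopologicalSpace X] : Prop :=
  ∃ K : ℕ → Set X, (∀ n, IsCountablyCompact' (K n)) ∧
    ∀ U : Set X, IsOpen U ↔ ∀ n, ∃ V : Set X, IsOpen V ∧ U ∩ K n = V ∩ K n

/-- A set is dense in itself if it has no points isolated in its subspace topology. -/
def DenseInItself {X : Type*} [TopologicalSpace X] (A : Set X) : Prop :=
  ∀ x ∈ A, x ∈ closure (A \ {x})

/-- A strict vD-network at `x`: a countable family of infinite closed discrete
sets, almost contained in every open neighborhood of `x` member-wise. -/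
def StrictVDNetwork {X : Type*} [TopologicalSpace X] (D : Set (Set X)) (x : X) : Prop :=
  D.Countable ∧ (∀ E ∈ D, E.Infinite ∧ IsClosedDiscrete E) ∧
    ∀ U : Set X, IsOpen U → x ∈ U → ∃ E ∈ D, (E \ U).Finite

/-- A relation `R ⊆ G × G` is large if for all `a b`, `(a,b) ∈ R` or `(a, a·b⁻¹) ∈ R`. -/
def IsLargeRel {G : Type*} [Group G] (R : Set (G × G)) : Prop :=
  ∀ a b : G, (a, b) ∈ R ∨ (a, a * b⁻¹) ∈ R

/-- `R⁻¹[B] = {a : (a,b) ∈ R for some b ∈ B}`. -/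
def relPreimage {G : Type*} (R : Set (G × G)) (B : Set G) : Set G :=
  {a | ∃ b ∈ B, (a, b) ∈ R}
/-- If alternative (1) of IIA fails for a weakly closed invariant
ideal `I` on a countable group `G`, then for every countable sequence of large
relations `R n` there is a sequence `C → 1` with `Rₙ⁻¹[C \ F]` `I`-positive for
all `n` and all finite `F`. -/
theorem statement5 (G : Type*) [Group G] [TopologicalSpace G] [IsTopologicalGroup G]
    [T1Space G] [Countable G] (I : Set (Set G)) (hI : IsIdeal I)
    (hwc : WeaklyClosed I) (hinv : InvariantIdeal I)
    (hfail : ¬ CapturesConvSeqs I)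
    (R : ℕ → Set (G × G)) (hR : ∀ n, IsLargeRel (R n)) :
    ∃ C : Set G, IsConvSeqTo C 1 ∧
      ∀ n : ℕ, ∀ F : Set G, F.Finite → relPreimage (R n) (C \ F) ∉ I := by
  classical
  set Dn : ℕ → G → Set G := fun n x => {a | (a, x) ∈ R n} with hDn
  set Bn : ℕ → Set G := fun n => {b | Dn n b ∈ I} with hBn
  set Pn : ℕ → G → Set G := fun n x => (fun a => a * x⁻¹) '' Dn n x with hPn
  set S : Set (Set G) :=
    {D | ∃ n : ℕ, ∃ g : G, Bn n ∈ I ∧ D = (fun h => h * g) '' Bn n} ∪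
    {D | ∃ n : ℕ, ∃ x g : G, x ∈ Bn n ∧ D = (fun h => h * g) '' Pn n x} with hSdef
  have hScount : S.Countable := by
    apply Set.Countable.union
    · have hsub : {D | ∃ n : ℕ, ∃ g : G, Bn n ∈ I ∧ D = (fun h => h * g) '' Bn n} ⊆
        Set.range (fun q : ℕ × G => (fun h => h * q.2) '' Bn q.1) := by
        rintro D ⟨n, g, -, rfl⟩; exact ⟨(n, g), rfl⟩
      exact (Set.countable_range _).mono hsub
    · have hsub : {D | ∃ n : ℕ, ∃ x g : G, x ∈ Bn n ∧ D = (fun h => h * g) '' Pn n x} ⊆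
        Set.range (fun q : ℕ × G × G => (fun h => h * q.2.2) '' Pn q.1 q.2.1) := by
        rintro D ⟨n, x, g, -, rfl⟩; exact ⟨(n, x, g), rfl⟩
      exact (Set.countable_range _).mono hsub
  have hSsub : S ⊆ I := by
    rintro D (⟨n, g, hBI, rfl⟩ | ⟨n, x, g, hx, rfl⟩)
    · exact (hinv _ hBI g).2.1
    · have h1 : Pn n x ∈ I := (hinv _ hx x⁻¹).2.1
      exact (hinv _ h1 g).2.1
  have hav : ∃ C : Set G, ∃ p : G, IsConvSeqTo C p ∧ ∀ A ∈ S, (C ∩ A).Finite := by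
    by_contra hcon
    push_neg at hcon
    apply hfail
    refine ⟨S, hScount, hSsub, ?_⟩
    intro C p hCp
    obtain ⟨A, hA, hAfin⟩ := hcon C p hCp
    exact ⟨A, hA, hAfin⟩
  obtain ⟨C, p, hCp, hCS⟩ := hav
  set C' : Set G := (fun c => c * p⁻¹) '' C with hC'def
  have hC'conv : IsConvSeqTo C' 1 := by
    constructor
    · exact hCp.1.image ((mul_left_injective p⁻¹).injOn)
    · intro U hU
      have hcont : ContinuousAt (fun c : G => c * p⁻¹) p :=
        (continuous_mul_right p⁻¹).continuousAt
      have hpre : (fun c : G => c * p⁻¹) ⁻¹' U ∈ nhds p :=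
        hcont.preimage_mem_nhds (by simpa using hU)
      have hfin := hCp.2 _ hpre
      refine (hfin.image (fun c => c * p⁻¹)).subset ?_
      rintro y ⟨⟨c, hc, rfl⟩, hyU⟩
      exact ⟨c, ⟨hc, fun h => hyU h⟩, rfl⟩
  have helper : ∀ D : Set G, ((fun h => h * p) '' D) ∈ S → (C' ∩ D).Finite := by
    intro D hD
    have h1 := hCS _ hD
    refine (h1.image (fun c => c * p⁻¹)).subset ?_
    rintro y ⟨⟨c, hc, rfl⟩, hyD⟩
    refine ⟨c, ⟨hc, ⟨c * p⁻¹, hyD, by simp⟩⟩, rfl⟩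
  refine ⟨C', hC'conv, ?_⟩
  intro n F hF hA
  by_cases hB : Bn n ∈ I
  · -- C' almost avoids Bn n; find c ∈ C' \ (Bn n ∪ F) with Dn n c ∉ I
    have hfinB : (C' ∩ Bn n).Finite := helper (Bn n) (Or.inl ⟨n, p, hB, rfl⟩)
    have hinf : (C' \ ((C' ∩ Bn n) ∪ F)).Infinite :=
      hC'conv.1.diff (hfinB.union hF)
    obtain ⟨c, hcC', hcn⟩ := hinf.nonempty
    have hcB : c ∉ Bn n := fun h => hcn (Or.inl ⟨hcC', h⟩)
    have hcF : c ∉ F := fun h => hcn (Or.inr h)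
    apply hcB
    show Dn n c ∈ I
    refine hI.1 _ _ ?_ hA
    intro a ha
    exact ⟨c, ⟨hcC', hcF⟩, ha⟩
  · -- weak closedness case
    apply hB
    have hiff := hwc (relPreimage (R n) (C' \ F)) C' hC'conv
    have hmem : relPreimage (R n) (C' \ F) ∪
        {x : G | ((fun c => c * x) '' C' \ relPreimage (R n) (C' \ F)).Finite} ∈ I :=
      hiff.1 hA
    refine hI.1 _ _ ?_ hmem
    intro x hx
    right
    show ((fun c => c * x) '' C' \ relPreimage (R n) (C' \ F)).Finite
    have hfinP : (C' ∩ Pn n x).Finite := helper (Pn n x) (Or.inr ⟨n, x, p, hx, rfl⟩)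
    refine (((hfinP.union hF).image (fun c => c * x))).subset ?_
    rintro y ⟨⟨c, hc, rfl⟩, hyA⟩
    rcases hR n (c * x) x with h | h
    · refine ⟨c, Or.inl ⟨hc, ⟨c * x, h, by simp⟩⟩, rfl⟩
    · have h' : (c * x, c) ∈ R n := by simpa using h
      by_cases hcF : c ∈ F
      · exact ⟨c, Or.inr hcF, rfl⟩
      · exact absurd ⟨c, ⟨hc, hcF⟩, h'⟩ hyA
end

section
/- Let X be a countable sequential T1 topological space and let I be an ideal on X with the following properties: I contains all singletons; closure(I) ∈ I for every I ∈ I; and for every A ∈ I⁺ there is Y ⊆ A with Y ∈ I⁺ such that closure(Y \ I) = closure(Y) for every I ∈ I. Then I is tame. -/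
open Set Filter Topology TopologicalSpace

section Statement9Aux

variable {X : Type*} [TopologicalSpace X]

/-- Sequential reachability: the smallest sequentially closed collection containing `A`. -/
inductive SeqReach (A : Set X) : X → Prop
  | base (x : X) (hx : x ∈ A) : SeqReach A x
  | lim (u : ℕ → X) (x : X) (hu : ∀ n, SeqReach A (u n))
      (hc : Tendsto u atTop (𝓝 x)) : SeqReach A x

lemma seqReach_of_mem_closure [SequentialSpace X] {A : Set X} {x : X}
    (hx : x ∈ closure A) : SeqReach A x := by
  have hsc : IsSeqClosed {y | SeqReach A y} := fun u p hu hp => SeqReach.lim u p hu hp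
  exact hsc.isClosed.closure_subset_iff.2 (fun y hy => SeqReach.base y hy) hx

lemma mem_closure_image_of_infinite {u : ℕ → X} {x : X}
    (h : Tendsto u atTop (𝓝 x)) {S : Set ℕ} (hS : S.Infinite) :
    x ∈ closure (u '' S) := by
  rw [mem_closure_iff]
  intro U hU hxU
  obtain ⟨N, hN⟩ := eventually_atTop.1 (h (hU.mem_nhds hxU))
  obtain ⟨n, hnS, hn⟩ := hS.exists_gt N
  exact ⟨u n, hN n hn.le, ⟨n, hnS, rfl⟩⟩

lemma exists_infinite_fiber_of_finite_image {S : Set ℕ} (hS : S.Infinite) {m : ℕ → ℕ}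
    (hfin : (m '' S).Finite) : ∃ v ∈ m '' S, {n | n ∈ S ∧ m n = v}.Infinite := by
  by_contra h
  push_neg at h
  have hsub : S ⊆ ⋃ v ∈ m '' S, {n | n ∈ S ∧ m n = v} := fun n hn =>
    mem_biUnion (mem_image_of_mem m hn) ⟨hn, rfl⟩
  exact hS ((hfin.biUnion (fun v hv => h v hv)).subset hsub)

/-- Key capture lemma: every sequentially reachable point from `A ⊆ Y` is either in the
closure of a single `Y`-fiber over `f '' A`, or carries a countable family of infinite
subsets of `ω` such that any `j` hitting all of them has the point in `closure (Y ∩ f⁻¹ j)`. -/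
lemma seqReach_capture {Y A : Set X} {f : X → ℕ} (hA : A ⊆ Y) {x : X}
    (hx : SeqReach A x) :
    (∃ m ∈ f '' A, x ∈ closure (Y ∩ f ⁻¹' {m})) ∨
    (∃ Zs : Set (Set ℕ), Zs.Countable ∧ (∀ Z ∈ Zs, Z.Infinite) ∧
      ∀ j : Set ℕ, (∀ Z ∈ Zs, (Z ∩ j).Infinite) → x ∈ closure (Y ∩ f ⁻¹' j)) := by
  induction hx with
  | base y hy =>
    exact Or.inl ⟨f y, mem_image_of_mem f hy, subset_closure ⟨hA hy, rfl⟩⟩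
  | lim u p hu hc ih =>
    classical
    by_cases hP : {n : ℕ | ∃ m ∈ f '' A, u n ∈ closure (Y ∩ f ⁻¹' {m})}.Infinite
    · set S := {n : ℕ | ∃ m ∈ f '' A, u n ∈ closure (Y ∩ f ⁻¹' {m})} with hSdef
      have hm : ∀ n ∈ S, ∃ m, m ∈ f '' A ∧ u n ∈ closure (Y ∩ f ⁻¹' {m}) := by
        intro n hn
        obtain ⟨m, h1, h2⟩ := hn
        exact ⟨m, h1, h2⟩
      choose! m hm1 hm2 using hm
      by_cases hMS : (m '' S).Finite
      · obtain ⟨v, hv, hfib⟩ := exists_infinite_fiber_of_finite_image hP hMS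
        obtain ⟨n₀, hn₀⟩ := hfib.nonempty
        refine Or.inl ⟨v, hn₀.2 ▸ hm1 n₀ hn₀.1, ?_⟩
        have hsub : u '' {n | n ∈ S ∧ m n = v} ⊆ closure (Y ∩ f ⁻¹' {v}) := by
          rintro _ ⟨n, ⟨hnS, hnv⟩, rfl⟩
          exact hnv ▸ hm2 n hnS
        exact closure_minimal hsub isClosed_closure (mem_closure_image_of_infinite hc hfib)
      · refine Or.inr ⟨{m '' S}, countable_singleton _, ?_, ?_⟩
        · intro Z hZ
          rw [mem_singleton_iff] at hZ
          exact hZ ▸ hMS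
        · intro j hj
          have hZj : ((m '' S) ∩ j).Infinite := hj _ rfl
          have hS' : {n | n ∈ S ∧ m n ∈ j}.Infinite := by
            intro hfin
            apply hZj
            have hsub : (m '' S) ∩ j ⊆ m '' {n | n ∈ S ∧ m n ∈ j} := by
              rintro v ⟨⟨n, hnS, rfl⟩, hvj⟩
              exact ⟨n, ⟨hnS, hvj⟩, rfl⟩
            exact ((hfin.image m).subset hsub)
          have hsub : u '' {n | n ∈ S ∧ m n ∈ j} ⊆ closure (Y ∩ f ⁻¹' j) := by
            rintro _ ⟨n, ⟨hnS, hnj⟩, rfl⟩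
            refine closure_mono ?_ (hm2 n hnS)
            exact inter_subset_inter_right _ (preimage_mono (singleton_subset_iff.2 hnj))
          exact closure_minimal hsub isClosed_closure (mem_closure_image_of_infinite hc hS')
    · have hT : {n : ℕ | ¬ ∃ m ∈ f '' A, u n ∈ closure (Y ∩ f ⁻¹' {m})}.Infinite := by
        have h1 := (Set.not_infinite.1 hP).infinite_compl
        simpa [Set.compl_setOf] using h1
      have hZt : ∀ n ∈ {n : ℕ | ¬ ∃ m ∈ f '' A, u n ∈ closure (Y ∩ f ⁻¹' {m})},
          ∃ Zs : Set (Set ℕ), Zs.Countable ∧ (∀ Z ∈ Zs, Z.Infinite) ∧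
            ∀ j : Set ℕ, (∀ Z ∈ Zs, (Z ∩ j).Infinite) → u n ∈ closure (Y ∩ f ⁻¹' j) := by
        intro n hn
        rcases ih n with h | h
        · exact absurd h hn
        · exact h
      choose! Zf hZf1 hZf2 hZf3 using hZt
      set T := {n : ℕ | ¬ ∃ m ∈ f '' A, u n ∈ closure (Y ∩ f ⁻¹' {m})} with hTdef
      refine Or.inr ⟨⋃ n ∈ T, Zf n, ?_, ?_, ?_⟩
      · exact (Set.to_countable T).biUnion (fun n hn => hZf1 n hn)
      · intro Z hZ
        rw [mem_iUnion₂] at hZ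
        obtain ⟨n, hn, hZn⟩ := hZ
        exact hZf2 n hn Z hZn
      · intro j hj
        have hsub : u '' T ⊆ closure (Y ∩ f ⁻¹' j) := by
          rintro _ ⟨n, hn, rfl⟩
          exact hZf3 n hn j (fun Z hZ => hj Z (mem_biUnion hn hZ))
        exact closure_minimal hsub isClosed_closure (mem_closure_image_of_infinite hc hT)

end Statement9Aux

/-- an ideal on a countable sequential space containing all
singletons, closed under closures, and admitting kernels in positive sets, is
tame. -/
theorem statement9 (X : Type*) [TopologicalSpace X] [T1Space X] [Countable X]
    [SequentialSpace X] (I : Set (Set X)) (hI : IsIdeal I)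
    (hsing : ∀ x : X, {x} ∈ I)
    (hcl : ∀ A ∈ I, closure A ∈ I)
    (hker : ∀ A : Set X, A ∉ I →
      ∃ Y : Set X, Y ⊆ A ∧ Y ∉ I ∧ ∀ B ∈ I, closure (Y \ B) = closure Y) :
    Tame I := by
  intro Y₀ hY₀ f J hJ hJhit
  classical
  obtain ⟨Y, hYsub, hY, hkerY⟩ := hker Y₀ hY₀
  by_contra hbad
  push_neg at hbad
  have bad : ∀ j ∈ J, Y ∩ f ⁻¹' j ∈ I := fun j hj =>
    hI.1 _ _ (inter_subset_inter_left _ hYsub) (hbad j hj)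
  -- a "capture package" for every point of Y
  have hpack : ∀ q ∈ Y, ∃ Zs : Set (Set ℕ), Zs.Countable ∧ (∀ Z ∈ Zs, Z.Infinite) ∧
      ∀ j : Set ℕ, (∀ Z ∈ Zs, (Z ∩ j).Infinite) → q ∈ closure (Y ∩ f ⁻¹' j) := by
    intro q hq
    by_cases hW : {m : ℕ | q ∈ closure (Y ∩ f ⁻¹' {m})}.Infinite
    · refine ⟨{{m : ℕ | q ∈ closure (Y ∩ f ⁻¹' {m})}}, countable_singleton _, ?_, ?_⟩
      · intro Z hZ
        rw [mem_singleton_iff] at hZ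
        exact hZ ▸ hW
      · intro j hj
        obtain ⟨mm, hmm⟩ := (hj _ rfl).nonempty
        refine closure_mono ?_ hmm.1
        exact inter_subset_inter_right _ (preimage_mono (singleton_subset_iff.2 hmm.2))
    · set W := {m : ℕ | q ∈ closure (Y ∩ f ⁻¹' {m})} with hWdef
      have hWJ : W ∈ J := hJ.2.2 _ (Set.not_infinite.1 hW)
      have hBI : closure (Y ∩ f ⁻¹' W) ∈ I := hcl _ (bad _ hWJ)
      have hclA : closure (Y \ closure (Y ∩ f ⁻¹' W)) = closure Y := hkerY _ hBI
      have hqA : q ∈ closure (Y \ closure (Y ∩ f ⁻¹' W)) := by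
        rw [hclA]; exact subset_closure hq
      have hcap := seqReach_capture (f := f) (Set.diff_subset) (seqReach_of_mem_closure hqA)
      rcases hcap with ⟨mm, ⟨y, hyA, rfl⟩, hqm⟩ | ⟨Zs, h1, h2, h3⟩
      · have hyW : y ∈ Y ∩ f ⁻¹' W := ⟨hyA.1, hqm⟩
        exact absurd (subset_closure hyW) hyA.2
      · exact ⟨Zs, h1, h2, h3⟩
  choose! Zs hZc hZinf hZcap using hpack
  -- one global countable family, one application of ω-hitting
  have h𝒲c : (insert (Set.univ : Set ℕ) (⋃ q ∈ Y, Zs q)).Countable :=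
    ((Set.to_countable Y).biUnion (fun q hq => hZc q hq)).insert _
  have h𝒲inf : ∀ Z ∈ insert (Set.univ : Set ℕ) (⋃ q ∈ Y, Zs q), Z.Infinite := by
    intro Z hZ
    rcases hZ with hZ | hZ
    · exact hZ ▸ Set.infinite_univ
    · rw [mem_iUnion₂] at hZ
      obtain ⟨q, hq, hZq⟩ := hZ
      exact hZinf q hq Z hZq
  obtain ⟨g, hg⟩ := h𝒲c.exists_eq_range ⟨Set.univ, mem_insert _ _⟩
  obtain ⟨j, hjJ, hjhit⟩ := hJhit g (fun n => h𝒲inf _ (hg ▸ mem_range_self n))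
  have hhitall : ∀ Z ∈ insert (Set.univ : Set ℕ) (⋃ q ∈ Y, Zs q), (Z ∩ j).Infinite := by
    intro Z hZ
    rw [hg] at hZ
    obtain ⟨n, rfl⟩ := hZ
    exact hjhit n
  have hYF : Y ⊆ closure (Y ∩ f ⁻¹' j) := fun q hq =>
    hZcap q hq j (fun Z hZ => hhitall Z (mem_insert_of_mem _ (mem_biUnion hq hZ)))
  exact hY (hI.1 _ _ hYF (hcl _ (bad j hjJ)))
end

section
/- A countable T1 topological space X is groomed if and only if for every dense D ⊆ X there exists a point x ∈ X such that either there is an infinite sequence S ⊆ D converging to x, or there is a strict vD-network at x consisting of subsets of D. -/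
open Set Filter Topology TopologicalSpace

section Aux

variable {X : Type*} [TopologicalSpace X]

/-- If an infinite set does not converge to `p`, it has an infinite subset whose
closure misses `p`. -/
lemma aux_shrinkAway {Z : Set X} (hZ : Z.Infinite) (p : X)
    (h : ¬ IsConvSeqTo Z p) : ∃ S, S ⊆ Z ∧ S.Infinite ∧ p ∉ closure S := by
  have : ∃ U ∈ nhds p, ¬ (Z \ U).Finite := by
    by_contra hc
    push_neg at hc
    exact h ⟨hZ, hc⟩
  obtain ⟨U, hU, hinf⟩ := this
  obtain ⟨V, hVU, hVo, hpV⟩ := mem_nhds_iff.mp hU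
  refine ⟨Z \ V, diff_subset, ?_, ?_⟩
  · intro hfin
    exact hinf (hfin.subset (fun a ha => ⟨ha.1, fun hv => ha.2 (hVU hv)⟩))
  · intro hcl
    have : closure (Z \ V) ⊆ Vᶜ := by
      rw [← hVo.isClosed_compl.closure_eq]
      exact closure_mono (fun a ha => ha.2)
    exact this hcl hpV

/-- Data for the recursive chain construction. -/
structure AuxChainData (Z : Set X) : Type _ where
  S : Set X
  pt : X
  inf : S.Infinite
  sub : S ⊆ Z

noncomputable def auxChainStep (Z : Set X)
    (key : ∀ S : Set X, S.Infinite → S ⊆ Z → ∀ p : X,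
      ∃ S', S' ⊆ S ∧ S'.Infinite ∧ p ∉ closure S')
    (p : X) (c : AuxChainData Z) : AuxChainData Z :=
  { S := (key c.S c.inf c.sub p).choose \ {(key c.S c.inf c.sub p).choose_spec.2.1.nonempty.some}
    pt := (key c.S c.inf c.sub p).choose_spec.2.1.nonempty.some
    inf := (key c.S c.inf c.sub p).choose_spec.2.1.diff (finite_singleton _)
    sub := fun a ha => c.sub ((key c.S c.inf c.sub p).choose_spec.1 ha.1) }

lemma auxChainStep_spec (Z : Set X)
    (key : ∀ S : Set X, S.Infinite → S ⊆ Z → ∀ p : X,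
      ∃ S', S' ⊆ S ∧ S'.Infinite ∧ p ∉ closure S')
    (p : X) (c : AuxChainData Z) :
    ∃ T : Set X, T ⊆ c.S ∧ p ∉ closure T ∧ (auxChainStep Z key p c).pt ∈ T ∧
      (auxChainStep Z key p c).S = T \ {(auxChainStep Z key p c).pt} :=
  ⟨(key c.S c.inf c.sub p).choose, (key c.S c.inf c.sub p).choose_spec.1,
    (key c.S c.inf c.sub p).choose_spec.2.2,
    (key c.S c.inf c.sub p).choose_spec.2.1.nonempty.some_mem, rfl⟩

noncomputable def auxChain (Z : Set X) (hZ : Z.Infinite) (z0 : X)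
    (key : ∀ S : Set X, S.Infinite → S ⊆ Z → ∀ p : X,
      ∃ S', S' ⊆ S ∧ S'.Infinite ∧ p ∉ closure S')
    (e : ℕ → X) : ℕ → AuxChainData Z
  | 0 => ⟨Z, z0, hZ, subset_rfl⟩
  | (k+1) => auxChainStep Z key (e k) (auxChain Z hZ z0 key e k)

/-- In a countable space, an infinite set none of whose subsets converges
to any point contains an infinite closed discrete subset. -/
lemma aux_exists_closedDiscrete [T1Space X] [Countable X]
    {Z : Set X} (hZ : Z.Infinite)
    (hnc : ∀ S : Set X, S ⊆ Z → ∀ p : X, ¬ IsConvSeqTo S p) :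
    ∃ C : Set X, C ⊆ Z ∧ C.Infinite ∧ IsClosedDiscrete C := by
  have hne : Nonempty X := ⟨hZ.nonempty.some⟩
  obtain ⟨e, he⟩ := exists_surjective_nat X
  have key : ∀ S : Set X, S.Infinite → S ⊆ Z → ∀ p : X,
      ∃ S', S' ⊆ S ∧ S'.Infinite ∧ p ∉ closure S' := by
    intro S hS hSZ p
    obtain ⟨S', h1, h2, h3⟩ := aux_shrinkAway hS p (hnc S hSZ p)
    exact ⟨S', h1, h2, h3⟩
  set c : ℕ → AuxChainData Z := auxChain Z hZ hZ.nonempty.some key e with hc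
  have hspec : ∀ k, ∃ T : Set X, T ⊆ (c k).S ∧ e k ∉ closure T ∧ (c (k+1)).pt ∈ T ∧
      (c (k+1)).S = T \ {(c (k+1)).pt} := fun k =>
    auxChainStep_spec Z key (e k) (c k)
  set z : ℕ → X := fun k => (c (k+1)).pt with hz
  choose T hTsub hTcl hzT hTeq using hspec
  have hsub : ∀ k, (c (k+1)).S ⊆ (c k).S := by
    intro k a ha
    rw [hTeq k] at ha
    exact hTsub k ha.1
  have hmono : ∀ m k, m ≤ k → (c k).S ⊆ (c m).S := by
    intro m k hmk
    induction k with
    | zero => rw [Nat.le_zero.mp hmk]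
    | succ n ih =>
      rcases Nat.lt_or_ge m (n+1) with h | h
      · exact (hsub n).trans (ih (Nat.lt_succ_iff.mp h))
      · rw [Nat.le_antisymm hmk h]
  have hzmem : ∀ k, z k ∈ (c k).S := fun k => hTsub k (hzT k)
  have hznot : ∀ k, z k ∉ (c (k+1)).S := by
    intro k h
    rw [hTeq k] at h
    exact h.2 rfl
  have hinj : Function.Injective z := by
    have hne' : ∀ k i, k < i → z i ≠ z k := by
      intro k i hki hEq
      exact hznot k (hEq ▸ hmono (k+1) i hki (hzmem i))
    intro a b hab
    rcases lt_trichotomy a b with h | h | h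
    · exact absurd (hne' a b h hab.symm) (by simp)
    · exact h
    · exact absurd (hne' b a h hab) (by simp)
  have hkeyW : ∀ p : X, ∃ W : Set X, IsOpen W ∧ p ∈ W ∧ (W ∩ range z).Finite := by
    intro p
    obtain ⟨m, rfl⟩ := he p
    refine ⟨(closure (T m))ᶜ, (isClosed_closure).isOpen_compl, hTcl m, ?_⟩
    have himg : (closure (T m))ᶜ ∩ range z ⊆ z '' Set.Iic m := by
      rintro _ ⟨hnw, i, rfl⟩
      rcases le_or_gt i m with h | h
      · exact ⟨i, h, rfl⟩
      · exfalso
        have : z i ∈ T m := by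
          have h1 : (c i).S ⊆ (c (m+1)).S := hmono (m+1) i h
          have := h1 (hzmem i)
          rw [hTeq m] at this
          exact this.1
        exact hnw (subset_closure this)
    exact ((Set.finite_Iic m).image z).subset himg
  refine ⟨range z, ?_, infinite_range_of_injective hinj, ?_, ?_⟩
  · rintro _ ⟨k, rfl⟩; exact (c k).sub (hzmem k)
  · -- closed
    refine isClosed_of_closure_subset ?_
    intro p hp
    by_contra hpn
    obtain ⟨W, hWo, hpW, hWf⟩ := hkeyW p
    have hW'o : IsOpen (W ∩ (W ∩ range z)ᶜ) := hWo.inter hWf.isClosed.isOpen_compl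
    have hpW' : p ∈ W ∩ (W ∩ range z)ᶜ := ⟨hpW, fun h => hpn h.2⟩
    obtain ⟨q, hq1, hq2⟩ := mem_closure_iff.mp hp _ hW'o hpW'
    exact hq1.2 ⟨hq1.1, hq2⟩
  · -- discrete
    rintro x hx
    obtain ⟨W, hWo, hpW, hWf⟩ := hkeyW x
    refine ⟨W ∩ ((W ∩ range z) \ {x})ᶜ,
      hWo.inter (hWf.diff : ((W ∩ range z) \ {x}).Finite).isClosed.isOpen_compl, ?_⟩
    apply Set.eq_singleton_iff_unique_mem.mpr
    constructor
    · exact ⟨⟨hpW, fun h => h.2 rfl⟩, hx⟩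
    · rintro q ⟨⟨hq1, hq2⟩, hq3⟩
      by_contra hqx
      exact hq2 ⟨⟨hq1, hq3⟩, hqx⟩

end Aux

/-- a countable space is groomed iff every dense set admits a
point with either an infinite convergent sequence inside the dense set, or a
strict vD-network consisting of subsets of the dense set. -/
theorem statement16 (X : Type*) [TopologicalSpace X] [T1Space X] [Countable X] :
    Groomed X ↔ ∀ D : Set X, Dense D → ∃ x : X,
      (∃ S : Set X, S ⊆ D ∧ IsConvSeqTo S x) ∨
      (∃ F : Set (Set X), (∀ E ∈ F, E ⊆ D) ∧ StrictVDNetwork F x) := by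
  constructor
  · -- Groomed → RHS
    intro hg D hD
    by_contra hno
    push_neg at hno
    apply hg
    refine ⟨D, hD, ?_⟩
    intro x Z hZ
    by_contra hA
    push_neg at hA
    -- refine each Z n to an infinite closed discrete subset
    have hcd : ∀ n, ∃ C : Set X, C ⊆ Z n ∧ C.Infinite ∧ IsClosedDiscrete C := by
      intro n
      refine aux_exists_closedDiscrete (hZ n).2 ?_
      intro S hS p hconv
      exact (hno p).1 S (hS.trans (hZ n).1) hconv
    choose C hCsub hCinf hCcd using hcd
    refine (hno x).2 (range C) ?_ ?_
    · rintro _ ⟨n, rfl⟩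
      exact (hCsub n).trans (hZ n).1
    · refine ⟨countable_range C, ?_, ?_⟩
      · rintro _ ⟨n, rfl⟩
        exact ⟨hCinf n, hCcd n⟩
      · intro U hUo hxU
        have hDU : D \ U ⊆ D := diff_subset
        have hxcl : x ∉ closure (D \ U) := by
          intro h
          have : closure (D \ U) ⊆ Uᶜ := by
            rw [← hUo.isClosed_compl.closure_eq]
            exact closure_mono (fun a ha => ha.2)
          exact this h hxU
        obtain ⟨n, hn⟩ := hA (D \ U) hDU hxcl
        refine ⟨C n, ⟨n, rfl⟩, hn.subset ?_⟩
        intro a ha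
        exact ⟨hCsub n ha.1, (hZ n).1 (hCsub n ha.1), ha.2⟩
  · -- RHS → Groomed
    intro hrhs ⟨D, hD, hent⟩
    obtain ⟨x, hcase⟩ := hrhs D hD
    rcases hcase with ⟨S, hSD, hSinf, hSconv⟩ | ⟨F, hFD, hFcnt, hFmem, hFnet⟩
    · -- convergent sequence case
      obtain ⟨A, hAD, hAcl, hAinf⟩ := hent x (fun _ => S) (fun _ => ⟨hSD, hSinf⟩)
      have hT : (S ∩ A).Infinite := hAinf 0
      have : x ∈ closure (S ∩ A) := by
        rw [mem_closure_iff]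
        intro o ho hxo
        by_contra hemp
        rw [Set.not_nonempty_iff_eq_empty] at hemp
        refine hT ((hSconv o (ho.mem_nhds hxo)).subset ?_)
        intro a ha
        refine ⟨ha.1, fun hao => ?_⟩
        exact Set.eq_empty_iff_forall_notMem.mp hemp a ⟨hao, ha⟩
      exact hAcl (closure_mono inter_subset_right this)
    · -- vD-network case
      have hFne : F.Nonempty := by
        obtain ⟨E, hE, -⟩ := hFnet univ isOpen_univ (mem_univ x)
        exact ⟨E, hE⟩
      obtain ⟨f, hf⟩ := Set.Countable.exists_eq_range hFcnt hFne
      have hfmem : ∀ n, f n ∈ F := fun n => hf ▸ ⟨n, rfl⟩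
      obtain ⟨A, hAD, hAcl, hAinf⟩ := hent x f
        (fun n => ⟨hFD _ (hfmem n), (hFmem _ (hfmem n)).1⟩)
      rw [mem_closure_iff] at hAcl
      push_neg at hAcl
      obtain ⟨o, hoo, hxo, hemp⟩ := hAcl
      obtain ⟨E, hEF, hEfin⟩ := hFnet o hoo hxo
      obtain ⟨n, rfl⟩ := hf ▸ hEF
      refine hAinf n (hEfin.subset ?_)
      intro a ha
      refine ⟨ha.1, fun hao => ?_⟩
      exact Set.eq_empty_iff_forall_notMem.mp hemp a ⟨hao, ha.2⟩
end
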